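/- Let V be a valuation ring of a field K such that K is real closed (as an ordered field under the unique ordering) and V is convex in K. Then the residue field V/m_V is a real closed field. -/

import Mathlib

/-- A real closed (totally ordered) field: every nonnegative element is a square and
every polynomial of odd degree has a root. -/
def IsRealClosedOrderedField (K : Type*) [Field K] [LinearOrder K] [IsStrictOrderedRing K] : Prop :=
  (∀ x : K, 0 ≤ x → ∃ y : K, y ^ 2 = x) ∧
  ∀ p : Polynomial K, Odd p.natDegree → ∃ x : K, p.IsRoot x

/-- Order-free characterization of being a real closed field (under its unique
ordering): `-1` is not a square, every element is a square or the negative of a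
square, and every polynomial of odd degree has a root. -/
def IsRealClosedRing (F : Type*) [CommRing F] : Prop :=
  (¬ ∃ y : F, y ^ 2 = -1) ∧
  (∀ x : F, (∃ y : F, y ^ 2 = x) ∨ (∃ y : F, y ^ 2 = -x)) ∧
  ∀ p : Polynomial F, Odd p.natDegree → ∃ x : F, p.IsRoot x

/-- In a valuation subring, roots of monic polynomials with coefficients in `V` lie in `V`. -/
lemma root_mem_of_monic {K : Type*} [Field K] (V : Subring K)
    (hval : ∀ x : K, x ≠ 0 → x ∈ V ∨ x⁻¹ ∈ V)
    (Q : Polynomial V) (hQ : Q.Monic) (x : K)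
    (hx : Polynomial.eval₂ V.subtype x Q = 0) : x ∈ V := by
  by_contra hxV
  have hx0 : x ≠ 0 := fun h => hxV (h ▸ V.zero_mem)
  have hinv : x⁻¹ ∈ V := (hval x hx0).resolve_left hxV
  set n := Q.natDegree with hn
  rw [Polynomial.eval₂_eq_sum_range] at hx
  rw [Finset.sum_range_succ] at hx
  have hlead : V.subtype (Q.coeff n) = 1 := by
    rw [show Q.coeff n = 1 from hQ, map_one]
  rw [hlead, one_mul] at hx
  -- x ^ n = - ∑ i in range n, c i * x ^ i
  have hxn : x ^ n = -∑ i ∈ Finset.range n, V.subtype (Q.coeff i) * x ^ i := by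
    linear_combination hx
  have key : x = -∑ i ∈ Finset.range n, V.subtype (Q.coeff i) * (x⁻¹) ^ (n - 1 - i) := by
    have hn1 : x ^ n * (x⁻¹) ^ (n - 1) = x := by
      rcases Nat.eq_zero_or_pos n with h0 | hpos
      · exfalso
        apply hxV
        have : x ^ 0 = -∑ i ∈ Finset.range 0, V.subtype (Q.coeff i) * x ^ i := h0 ▸ hxn
        simp at this
      · rw [inv_pow, mul_inv_eq_iff_eq_mul₀ (pow_ne_zero _ hx0), mul_comm x, ← pow_succ]
        congr 1
        omega
    calc x = x ^ n * (x⁻¹) ^ (n - 1) := hn1.symm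
    _ = (-∑ i ∈ Finset.range n, V.subtype (Q.coeff i) * x ^ i) * (x⁻¹) ^ (n - 1) := by rw [hxn]
    _ = -∑ i ∈ Finset.range n, V.subtype (Q.coeff i) * x ^ i * (x⁻¹) ^ (n - 1) := by
        rw [neg_mul, Finset.sum_mul]
    _ = -∑ i ∈ Finset.range n, V.subtype (Q.coeff i) * (x⁻¹) ^ (n - 1 - i) := by
        congr 1
        apply Finset.sum_congr rfl
        intro i hi
        have hi' : i < n := Finset.mem_range.mp hi
        have : x ^ i * (x⁻¹) ^ (n - 1) = (x⁻¹) ^ (n - 1 - i) := by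
          rw [show n - 1 = i + (n - 1 - i) by omega, pow_add, ← mul_assoc, inv_pow,
            mul_inv_cancel₀ (pow_ne_zero _ hx0), one_mul]
          congr 1
          omega
        rw [mul_assoc, this]
  apply hxV
  rw [key]
  exact Subring.neg_mem _ (Subring.sum_mem _ fun i hi =>
    Subring.mul_mem _ (Q.coeff i).2 (Subring.pow_mem _ hinv _))

set_option synthInstance.maxHeartbeats 1000000 in
set_option maxHeartbeats 2000000 in
/-- If `V` is a convex valuation ring of a real closed field `K`, then
the residue field `V/m_V` is a real closed field. -/
theorem residueField_isRealClosed {K : Type*} [Field K] [LinearOrder K] [IsStrictOrderedRing K]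
    (hK : IsRealClosedOrderedField K) (V : Subring K)
    (hval : ∀ x : K, x ≠ 0 → x ∈ V ∨ x⁻¹ ∈ V)
    (hconv : ∀ a b : K, 0 ≤ b → b ≤ a → a ∈ V → b ∈ V)
    (m : Ideal V) (hm : m.IsMaximal) :
    IsRealClosedRing (V ⧸ m) := by
  refine ⟨?_, ?_, ?_⟩
  · rintro ⟨y, hy⟩
    obtain ⟨a, rfl⟩ := Ideal.Quotient.mk_surjective y
    have hmem : a ^ 2 + 1 ∈ m := by
      rw [← Ideal.Quotient.eq_zero_iff_mem, map_add, map_pow, map_one, hy]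
      ring
    have h1 : (1 : K) ≤ (a : K) ^ 2 + 1 := by nlinarith [sq_nonneg (a : K)]
    have hb : (0 : K) < (a : K) ^ 2 + 1 := by positivity
    have hbinv : ((a : K) ^ 2 + 1)⁻¹ ∈ V := by
      refine hconv 1 _ (by positivity) ?_ V.one_mem
      exact inv_le_one_of_one_le₀ h1
    have hunit : IsUnit (a ^ 2 + 1 : V) := by
      refine IsUnit.of_mul_eq_one ⟨_, hbinv⟩ ?_
      ext
      push_cast
      exact mul_inv_cancel₀ (ne_of_gt hb)
    exact hm.ne_top (m.eq_top_of_isUnit_mem hmem hunit)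
  · intro x
    obtain ⟨a, rfl⟩ := Ideal.Quotient.mk_surjective x
    have key : ∀ b : V, 0 ≤ (b : K) → ∃ z : V, z ^ 2 = b := by
      intro b hb
      obtain ⟨y, hy⟩ := hK.1 _ hb
      have hy' : |y| ^ 2 = (b : K) := by rw [sq_abs, hy]
      have hymem : |y| ∈ V := by
        rcases le_total |y| 1 with h1 | h1
        · exact hconv 1 |y| (abs_nonneg y) h1 V.one_mem
        · exact hconv (b : K) |y| (abs_nonneg y) (by nlinarith [abs_nonneg y]) b.2
      exact ⟨⟨|y|, hymem⟩, Subtype.ext (by push_cast; exact hy')⟩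
    rcases le_total 0 (a : K) with h | h
    · left
      obtain ⟨z, hz⟩ := key a h
      exact ⟨Ideal.Quotient.mk m z, by rw [← map_pow, hz]⟩
    · right
      obtain ⟨z, hz⟩ := key (-a) (by simpa using neg_nonneg.mpr h)
      exact ⟨Ideal.Quotient.mk m z, by rw [← map_pow, hz, map_neg]⟩
  · intro p hp
    have hp0 : p ≠ 0 := fun h => by simp [h] at hp
    have hc : p.leadingCoeff ≠ 0 := Polynomial.leadingCoeff_ne_zero.mpr hp0
    obtain ⟨d, hd⟩ := (Ideal.Quotient.maximal_ideal_iff_isField_quotient m).mp hm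
      |>.mul_inv_cancel hc
    have hd0 : d ≠ 0 := by
      rintro rfl
      simp at hd
    set q := p * Polynomial.C d with hqdef
    have hq : q.Monic := by
      unfold Polynomial.Monic
      rw [hqdef, Polynomial.leadingCoeff_mul, Polynomial.leadingCoeff_C, hd]
    have hdeg : q.natDegree = p.natDegree := by
      rw [hqdef, Polynomial.natDegree_mul hp0 (by simpa using hd0), Polynomial.natDegree_C,
        add_zero]
    obtain ⟨Q0, hQ0⟩ := Polynomial.map_surjective _ Ideal.Quotient.mk_surjective q
    obtain ⟨Q, hQmap, hQdeg, hQmonic⟩ :=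
      Polynomial.lifts_and_degree_eq_and_monic
        ((Polynomial.mem_lifts _).mpr ⟨Q0, hQ0⟩) hq
    set R := Q.map V.subtype with hRdef
    have hRmonic : R.Monic := hQmonic.map _
    have hRdeg : R.natDegree = p.natDegree := by
      rw [hRdef, hQmonic.natDegree_map, Polynomial.natDegree_eq_of_degree_eq hQdeg, hdeg]
    obtain ⟨x, hx⟩ := hK.2 R (by rw [hRdeg]; exact hp)
    have hx0 : Polynomial.eval₂ V.subtype x Q = 0 := by
      rw [← Polynomial.eval_map]
      exact hx
    have hxV : x ∈ V := root_mem_of_monic V hval Q hQmonic x hx0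
    refine ⟨Ideal.Quotient.mk m ⟨x, hxV⟩, ?_⟩
    have hQeval : Q.eval ⟨x, hxV⟩ = 0 := by
      have h2 : V.subtype (Q.eval ⟨x, hxV⟩) = 0 := by
        rw [← Polynomial.eval₂_hom]
        exact hx0
      exact Subtype.coe_injective (by simpa using h2)
    have hq0 : q.eval (Ideal.Quotient.mk m ⟨x, hxV⟩) = 0 := by
      rw [← hQmap, Polynomial.eval_map, Polynomial.eval₂_hom, hQeval, map_zero]
    rw [hqdef, Polynomial.eval_mul, Polynomial.eval_C, mul_eq_zero] at hq0
    exact hq0.resolve_right hd0
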